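/- Let p, q, r ≥ 2 be integers with 1/p + 1/q + 1/r ≤ 1 (so that M = max{p,q,r} ≥ 3), and let a > 0. Let x, y, z ∈ ℂ satisfy |x| ≤ 1, |x|/6 < √(|y|² + |z|²) < |x|/2, and a·|x| > 30M. Let t, c ∈ [0,1], and let w, w' ∈ ℂ³ with ‖w‖ < 3/|x| and ‖w'‖ ≤ ‖w‖. Set u = a·(y·z, z·x, x·y) + ((1−t+t·c)·p·x^{p−1}, (1−t)·q·y^{q−1}, (1−t)·r·z^{r−1}) + t·x^p·w and v = t·x^p·w' in ℂ³. Then ‖u‖ − ‖v‖ > 3(M−2)·|x| > 0. -/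

import Mathlib

/-- The vector `(u,v,w)` in `ℂ³` with the Euclidean norm. -/
noncomputable def vec3 (u v w : ℂ) : EuclideanSpace ℂ (Fin 3) :=
  (WithLp.equiv 2 (Fin 3 → ℂ)).symm ![u, v, w]

lemma vec3_norm (u v w : ℂ) :
    ‖vec3 u v w‖ = Real.sqrt (‖u‖ ^ 2 + ‖v‖ ^ 2 + ‖w‖ ^ 2) := by
  simp [vec3, EuclideanSpace.norm_eq, Fin.sum_univ_three]

lemma vec3_norm_le (u v w : ℂ) :
    ‖vec3 u v w‖ ≤ ‖u‖ + ‖v‖ + ‖w‖ := by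
  rw [vec3_norm]
  have hu := norm_nonneg u
  have hv := norm_nonneg v
  have hw := norm_nonneg w
  rw [show ‖u‖ + ‖v‖ + ‖w‖ =
      Real.sqrt ((‖u‖ + ‖v‖ + ‖w‖) ^ 2) by
    rw [Real.sqrt_sq (by linarith)]]
  apply Real.sqrt_le_sqrt
  nlinarith

lemma vec3_norm_ge (u v w : ℂ) :
    Real.sqrt (‖v‖ ^ 2 + ‖w‖ ^ 2) ≤ ‖vec3 u v w‖ := by
  rw [vec3_norm]
  apply Real.sqrt_le_sqrt
  nlinarith [sq_nonneg (‖u‖)]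

set_option maxHeartbeats 4000000 in
/-- The key gradient estimate for the deformed defining functions
`f_t`: with `u` the model for the holomorphic gradient `∇f_t` and `v = t·x^p·w'`
the model for the antiholomorphic gradient, one has
`‖u‖ − ‖v‖ > 3(M−2)|x| > 0`. -/
theorem stmt_3 (p q r : ℕ) (hp : 2 ≤ p) (hq : 2 ≤ q) (hr : 2 ≤ r)
    (hpqr : (1 : ℝ) / p + 1 / q + 1 / r ≤ 1)
    (a : ℝ) (ha : 0 < a)
    (x y z : ℂ) (hx1 : ‖x‖ ≤ 1)
    (hlow : ‖x‖ / 6 < Real.sqrt (‖y‖ ^ 2 + ‖z‖ ^ 2))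
    (hhigh : Real.sqrt (‖y‖ ^ 2 + ‖z‖ ^ 2) < ‖x‖ / 2)
    (hax : 30 * ((max p (max q r) : ℕ) : ℝ) < a * ‖x‖)
    (t c : ℝ) (ht : t ∈ Set.Icc (0 : ℝ) 1) (hc : c ∈ Set.Icc (0 : ℝ) 1)
    (w w' : EuclideanSpace ℂ (Fin 3))
    (hw : ‖w‖ < 3 / ‖x‖) (hw' : ‖w'‖ ≤ ‖w‖) :
    ‖(a : ℂ) • vec3 (y * z) (z * x) (x * y)
        + vec3 (((1 - t + t * c : ℝ) : ℂ) * (p : ℂ) * x ^ (p - 1))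
               (((1 - t : ℝ) : ℂ) * (q : ℂ) * y ^ (q - 1))
               (((1 - t : ℝ) : ℂ) * (r : ℂ) * z ^ (r - 1))
        + ((t : ℂ) * x ^ p) • w‖
      - ‖((t : ℂ) * x ^ p) • w'‖
      > 3 * (((max p (max q r) : ℕ) : ℝ) - 2) * ‖x‖
    ∧ 0 < 3 * (((max p (max q r) : ℕ) : ℝ) - 2) * ‖x‖ := by
  obtain ⟨ht0, ht1⟩ := ht
  obtain ⟨hc0, hc1⟩ := hc
  set M : ℝ := ((max p (max q r) : ℕ) : ℝ) with hM
  set X : ℝ := ‖x‖ with hX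
  -- M ≥ 3
  have hMnat : 3 ≤ max p (max q r) := by
    by_contra h
    push_neg at h
    have h1 := le_max_left p (max q r)
    have h3 := le_max_left q r
    have h4 := le_max_right q r
    have h2 := le_max_right p (max q r)
    have hpe : p = 2 ∧ q = 2 ∧ r = 2 := by omega
    obtain ⟨e1, e2, e3⟩ := hpe
    subst e1; subst e2; subst e3
    norm_num at hpqr
  have hM3 : (3 : ℝ) ≤ M := by rw [hM]; exact_mod_cast hMnat
  have hpM : (p : ℝ) ≤ M := by
    rw [hM]; exact_mod_cast le_max_left p (max q r)
  have hqM : (q : ℝ) ≤ M := by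
    rw [hM]; exact_mod_cast le_trans (le_max_left q r) (le_max_right p (max q r))
  have hrM : (r : ℝ) ≤ M := by
    rw [hM]; exact_mod_cast le_trans (le_max_right q r) (le_max_right p (max q r))
  -- X > 0
  have hXpos : 0 < X := by
    rcases (norm_nonneg x).lt_or_eq with h | h
    · exact h
    · exfalso
      have h' : X = 0 := by rw [hX, ← h]
      rw [h'] at hax
      nlinarith
  set s : ℝ := Real.sqrt (‖y‖ ^ 2 + ‖z‖ ^ 2) with hs
  have hs0 : 0 ≤ s := Real.sqrt_nonneg _
  have hys : ‖y‖ ≤ s :=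
    (Real.le_sqrt (norm_nonneg y) (by positivity)).mpr
      (by nlinarith [sq_nonneg (‖z‖)])
  have hzs : ‖z‖ ≤ s :=
    (Real.le_sqrt (norm_nonneg z) (by positivity)).mpr
      (by nlinarith [sq_nonneg (‖y‖)])
  set A := (a : ℂ) • vec3 (y * z) (z * x) (x * y) with hA
  set B := vec3 (((1 - t + t * c : ℝ) : ℂ) * (p : ℂ) * x ^ (p - 1))
               (((1 - t : ℝ) : ℂ) * (q : ℂ) * y ^ (q - 1))
               (((1 - t : ℝ) : ℂ) * (r : ℂ) * z ^ (r - 1)) with hB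
  set C := ((t : ℂ) * x ^ p) • w with hC
  set V := ((t : ℂ) * x ^ p) • w' with hV
  -- lower bound on ‖A‖
  have hAlow : a * X * s ≤ ‖A‖ := by
    rw [hA, norm_smul]
    have e1 : ‖(a : ℂ)‖ = a := by
      rw [Complex.norm_real, Real.norm_eq_abs, abs_of_pos ha]
    rw [e1]
    have e2 : Real.sqrt (‖z * x‖ ^ 2 + ‖x * y‖ ^ 2) = X * s := by
      have e3 : ‖z * x‖ ^ 2 + ‖x * y‖ ^ 2
          = X ^ 2 * (‖y‖ ^ 2 + ‖z‖ ^ 2) := by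
        simp only [norm_mul]; ring
      rw [e3, Real.sqrt_mul (sq_nonneg _), Real.sqrt_sq hXpos.le, hs]
    calc a * X * s = a * (X * s) := by ring
      _ ≤ a * ‖vec3 (y * z) (z * x) (x * y)‖ := by
          apply mul_le_mul_of_nonneg_left _ ha.le
          rw [← e2]; exact vec3_norm_ge _ _ _
  -- powers
  have hXp1 : X ^ (p - 1) ≤ X := by
    calc X ^ (p - 1) ≤ X ^ 1 := pow_le_pow_of_le_one hXpos.le hx1 (by omega)
      _ = X := pow_one X
  have hy1 : ‖y‖ ≤ 1 := by linarith
  have hz1 : ‖z‖ ≤ 1 := by linarith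
  have hYq1 : ‖y‖ ^ (q - 1) ≤ ‖y‖ := by
    calc ‖y‖ ^ (q - 1) ≤ ‖y‖ ^ 1 :=
        pow_le_pow_of_le_one (norm_nonneg y) hy1 (by omega)
      _ = _ := pow_one _
  have hZr1 : ‖z‖ ^ (r - 1) ≤ ‖z‖ := by
    calc ‖z‖ ^ (r - 1) ≤ ‖z‖ ^ 1 :=
        pow_le_pow_of_le_one (norm_nonneg z) hz1 (by omega)
      _ = _ := pow_one _
  -- bound on ‖B‖
  have hBle : ‖B‖ ≤ 2 * M * X := by
    rw [hB]
    refine le_trans (vec3_norm_le _ _ _) ?_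
    have habs1 : |1 - t + t * c| ≤ 1 := by
      rw [abs_le]; constructor <;> nlinarith
    have habs2 : |1 - t| ≤ 1 := by rw [abs_le]; constructor <;> linarith
    have b1 : ‖((1 - t + t * c : ℝ) : ℂ) * (p : ℂ) * x ^ (p - 1)‖
        ≤ (p : ℝ) * X ^ (p - 1) := by
      rw [norm_mul, norm_mul, norm_pow, Complex.norm_real, Real.norm_eq_abs, Complex.norm_natCast]
      have h := mul_le_mul_of_nonneg_right
        (mul_le_mul_of_nonneg_right habs1 (Nat.cast_nonneg p : (0:ℝ) ≤ p))
        (pow_nonneg (norm_nonneg x) (p - 1))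
      rw [one_mul] at h
      exact h
    have b2 : ‖((1 - t : ℝ) : ℂ) * (q : ℂ) * y ^ (q - 1)‖
        ≤ (q : ℝ) * ‖y‖ ^ (q - 1) := by
      rw [norm_mul, norm_mul, norm_pow, Complex.norm_real, Real.norm_eq_abs, Complex.norm_natCast]
      have h := mul_le_mul_of_nonneg_right
        (mul_le_mul_of_nonneg_right habs2 (Nat.cast_nonneg q : (0:ℝ) ≤ q))
        (pow_nonneg (norm_nonneg y) (q - 1))
      rw [one_mul] at h
      exact h
    have b3 : ‖((1 - t : ℝ) : ℂ) * (r : ℂ) * z ^ (r - 1)‖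
        ≤ (r : ℝ) * ‖z‖ ^ (r - 1) := by
      rw [norm_mul, norm_mul, norm_pow, Complex.norm_real, Real.norm_eq_abs, Complex.norm_natCast]
      have h := mul_le_mul_of_nonneg_right
        (mul_le_mul_of_nonneg_right habs2 (Nat.cast_nonneg r : (0:ℝ) ≤ r))
        (pow_nonneg (norm_nonneg z) (r - 1))
      rw [one_mul] at h
      exact h
    have c1 : (p : ℝ) * X ^ (p - 1) ≤ M * X := by
      have := mul_le_mul hpM hXp1 (pow_nonneg hXpos.le _) (by linarith)
      linarith
    have c2 : (q : ℝ) * ‖y‖ ^ (q - 1) ≤ M * X / 2 := by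
      have h1 : (q : ℝ) * ‖y‖ ^ (q - 1) ≤ M * ‖y‖ := by
        have := mul_le_mul hqM (hYq1) (pow_nonneg (norm_nonneg y) _) (by linarith)
        linarith
      have h2 : ‖y‖ ≤ X / 2 := by linarith
      nlinarith
    have c3 : (r : ℝ) * ‖z‖ ^ (r - 1) ≤ M * X / 2 := by
      have h1 : (r : ℝ) * ‖z‖ ^ (r - 1) ≤ M * ‖z‖ := by
        have := mul_le_mul hrM (hZr1) (pow_nonneg (norm_nonneg z) _) (by linarith)
        linarith
      have h2 : ‖z‖ ≤ X / 2 := by linarith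
      nlinarith
    linarith
  -- bound on ‖C‖ and ‖V‖
  have hXpow : X ^ p = X ^ (p - 1) * X := by
    rw [← pow_succ]
    congr 1
    omega
  have hCkey : ∀ (u : EuclideanSpace ℂ (Fin 3)), ‖u‖ ≤ ‖w‖ →
      ‖((t : ℂ) * x ^ p) • u‖ ≤ 3 * X := by
    intro u hu
    rw [norm_smul]
    have e1 : ‖(t : ℂ) * x ^ p‖ = t * X ^ p := by
      rw [norm_mul, norm_pow, Complex.norm_real, Real.norm_eq_abs, abs_of_nonneg ht0,
        hX]
    rw [e1]
    have hw3 : ‖u‖ ≤ 3 / X := le_trans hu hw.le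
    have h1 : t * X ^ p * ‖u‖ ≤ X ^ p * (3 / X) := by
      have hXppos : (0:ℝ) ≤ X ^ p := pow_nonneg hXpos.le _
      have h2 : t * X ^ p * ‖u‖ ≤ X ^ p * ‖u‖ :=
        mul_le_mul_of_nonneg_right (mul_le_of_le_one_left hXppos ht1) (norm_nonneg u)
      have h3 : X ^ p * ‖u‖ ≤ X ^ p * (3 / X) := by
        exact mul_le_mul_of_nonneg_left hw3 hXppos
      linarith
    have h4 : X ^ p * (3 / X) = 3 * X ^ (p - 1) := by
      rw [hXpow]; field_simp
    have h5 : 3 * X ^ (p - 1) ≤ 3 * X := by linarith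
    linarith
  have hCle : ‖C‖ ≤ 3 * X := hCkey w le_rfl
  have hVle : ‖V‖ ≤ 3 * X := hCkey w' hw'
  -- triangle inequality lower bound
  have htri : ‖A‖ - ‖B‖ - ‖C‖ ≤ ‖A + B + C‖ := by
    have h1 := norm_le_add_norm_add A (B + C)
    have h2 := norm_add_le B C
    rw [← add_assoc] at h1
    linarith
  -- ‖A‖ > 5 M X
  have haX : 0 < a * X := mul_pos ha hXpos
  have hA5 : 5 * M * X < ‖A‖ := by
    have h1 : a * X * (X / 6) < a * X * s := mul_lt_mul_of_pos_left hlow haX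
    have h2 : 30 * M * (X / 6) < a * X * (X / 6) :=
      mul_lt_mul_of_pos_right hax (by positivity)
    nlinarith
  clear_value A B C V M X s
  constructor
  · linarith only [htri, hA5, hBle, hCle, hVle]
  · have h0 : 0 < (M - 2) * X := mul_pos (by linarith only [hM3]) hXpos
    linarith only [h0]
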